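/- Let O be a valuation ring of finite Krull dimension and let A be a finite type O-algebra. Then the prime spectrum Spec(A) is a noetherian topological space. -/

import Mathlib

open PrimeSpectrum

lemma spec_finite (O : Type*) [CommRing O] [IsDomain O] [ValuationRing O]
    (hdim : ∃ r : ℕ, ringKrullDim O = r) : Finite (PrimeSpectrum O) := by
  obtain ⟨r, hr⟩ := hdim
  letI : LinearOrder (PrimeSpectrum O) :=
    { (inferInstance : PartialOrder (PrimeSpectrum O)) with
      le_total := fun a b => (ValuationRing.le_total_ideal O).total a.asIdeal b.asIdeal
      toDecidableLE := Classical.decRel _ }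
  by_contra hinf
  rw [not_finite_iff_infinite] at hinf
  have hI : (Set.univ : Set (PrimeSpectrum O)).Infinite := Set.infinite_univ
  obtain ⟨t, -, ht⟩ := hI.exists_subset_card_eq (r + 2)
  have hpos : 0 < t.card := by omega
  let e := t.orderIsoOfFin ht
  let s : LTSeries (PrimeSpectrum O) :=
    ⟨r + 1, fun i => (e (Fin.cast (by omega) i) : PrimeSpectrum O),
      fun i => by
        have := e.strictMono (by
          show (Fin.cast (by omega : r+2 = t.card) i.castSucc) <
            (Fin.cast (by omega) i.succ)
          simp [Fin.lt_def])
        exact_mod_cast this⟩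
  have := Order.LTSeries.length_le_krullDim s
  rw [show Order.krullDim (PrimeSpectrum O) = ringKrullDim O from rfl, hr] at this
  have : ((r + 1 : ℕ) : WithBot ℕ∞) ≤ (r : ℕ) := this
  simp only [Nat.cast_le] at this
  omega

open PrimeSpectrum
set_option maxHeartbeats 1600000 in

lemma key (O A : Type*) [CommRing O] [IsDomain O] [CommRing A] [Algebra O A]
    [Algebra.FiniteType O A] (p : PrimeSpectrum O) :
    ∃ s : Set (PrimeSpectrum A), TopologicalSpace.NoetherianSpace s ∧
      ∀ q : PrimeSpectrum A, PrimeSpectrum.comap (algebraMap O A) q = p → q ∈ s := by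
  classical
  let M : Submonoid A := Submonoid.map (algebraMap O A) p.asIdeal.primeCompl
  let B := Localization M
  let φ : O →+* B := (algebraMap A B).comp (algebraMap O A)
  let I : Ideal B := Ideal.map φ p.asIdeal
  let C := B ⧸ I
  let f : A →+* C := (Ideal.Quotient.mk I).comp (algebraMap A B)
  -- the residue ring and fraction field
  let Op := O ⧸ p.asIdeal
  haveI : p.asIdeal.IsPrime := p.2
  let K := FractionRing Op
  have h0 : ∀ a ∈ p.asIdeal, ((Ideal.Quotient.mk I).comp φ) a = 0 := fun a ha => by
    rw [RingHom.comp_apply, Ideal.Quotient.eq_zero_iff_mem]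
    exact Ideal.mem_map_of_mem φ ha
  let g : Op →+* C := Ideal.Quotient.lift p.asIdeal ((Ideal.Quotient.mk I).comp φ) h0
  have hunit : ∀ y : Op, y ≠ 0 → IsUnit (g y) := by
    intro y hy
    obtain ⟨x, rfl⟩ := Ideal.Quotient.mk_surjective y
    have hx : x ∈ p.asIdeal.primeCompl := fun hx =>
      hy (Ideal.Quotient.eq_zero_iff_mem.mpr hx)
    have : IsUnit (algebraMap A B (algebraMap O A x)) :=
      IsLocalization.map_units B (⟨algebraMap O A x, ⟨x, hx, rfl⟩⟩ : M)
    exact (this.map (Ideal.Quotient.mk I))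
  let h : K →+* C := IsLocalization.lift (M := nonZeroDivisors Op)
    (fun y => hunit y.1 (nonZeroDivisors.ne_zero y.2))
  letI : Algebra K C := h.toAlgebra
  have halg : ∀ z : Op, algebraMap K C (algebraMap Op K z) = g z := fun z =>
    IsLocalization.lift_eq _ z
  obtain ⟨S, hS⟩ := (inferInstance : Algebra.FiniteType O A).out
  let T : Subalgebra K C := Algebra.adjoin K ((S.image f : Finset C) : Set C)
  have hfa : ∀ a : A, f a ∈ T := by
    intro a
    have ha : a ∈ Algebra.adjoin O ((S : Finset A) : Set A) := hS ▸ Algebra.mem_top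
    induction ha using Algebra.adjoin_induction with
    | mem x hx => exact Algebra.subset_adjoin (Finset.mem_coe.mpr
        (Finset.mem_image_of_mem f hx))
    | algebraMap r =>
        have : f (algebraMap O A r) = g (Ideal.Quotient.mk p.asIdeal r) := rfl
        rw [this, ← halg]
        exact T.algebraMap_mem _
    | add x y _ _ hx hy => rw [map_add]; exact T.add_mem hx hy
    | mul x y _ _ hx hy => rw [map_mul]; exact T.mul_mem hx hy
  haveI : Algebra.FiniteType K C := by
    constructor
    refine ⟨S.image f, ?_⟩
    rw [eq_top_iff]
    rintro c -
    obtain ⟨b, rfl⟩ := Ideal.Quotient.mk_surjective (I := I) c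
    obtain ⟨⟨a, m⟩, rfl⟩ := IsLocalization.mk'_surjective M b
    obtain ⟨x, hx, hxm⟩ := m.2
    have hxz : (Ideal.Quotient.mk p.asIdeal x : Op) ≠ 0 := fun hz =>
      hx (Ideal.Quotient.eq_zero_iff_mem.mp hz)
    have hk : algebraMap Op K (Ideal.Quotient.mk p.asIdeal x) ≠ 0 := fun hz =>
      hxz (IsFractionRing.injective Op K (by simpa using hz))
    set v : K := algebraMap Op K (Ideal.Quotient.mk p.asIdeal x) with hv
    have hkey : (Ideal.Quotient.mk I) (IsLocalization.mk' B a m) * algebraMap K C v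
        = f a := by
      rw [halg]
      have : g (Ideal.Quotient.mk p.asIdeal x) = (Ideal.Quotient.mk I) (algebraMap A B m.1) := by
        show (Ideal.Quotient.mk I) (φ x) = _
        rw [show φ x = algebraMap A B m.1 by simp [φ, ← hxm]]
      rw [this, ← map_mul, IsLocalization.mk'_spec]
      rfl
    have : (Ideal.Quotient.mk I) (IsLocalization.mk' B a m)
        = f a * algebraMap K C v⁻¹ := by
      have hvu : algebraMap K C v * algebraMap K C v⁻¹ = 1 := by
        rw [← map_mul, mul_inv_cancel₀ hk, map_one]
      calc (Ideal.Quotient.mk I) (IsLocalization.mk' B a m)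
          = (Ideal.Quotient.mk I) (IsLocalization.mk' B a m) *
              (algebraMap K C v * algebraMap K C v⁻¹) := by rw [hvu, mul_one]
        _ = ((Ideal.Quotient.mk I) (IsLocalization.mk' B a m) * algebraMap K C v) *
              algebraMap K C v⁻¹ := by ring
        _ = f a * algebraMap K C v⁻¹ := by rw [hkey]
    rw [this]
    exact T.mul_mem (hfa a) (T.algebraMap_mem _)
  haveI : IsNoetherianRing C := Algebra.FiniteType.isNoetherianRing K C
  refine ⟨Set.range (PrimeSpectrum.comap f), ?_, ?_⟩
  · exact TopologicalSpace.NoetherianSpace.range _ (PrimeSpectrum.continuous_comap f)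
  · intro q hq
    have hq' : Ideal.comap (algebraMap O A) q.asIdeal = p.asIdeal :=
      congrArg PrimeSpectrum.asIdeal hq
    have hd : Disjoint (M : Set A) (q.asIdeal : Set A) := by
      rw [Set.disjoint_left]
      rintro a ⟨x, hx, rfl⟩ haq
      exact hx (hq' ▸ Ideal.mem_comap.mpr haq)
    have hq'prime : (Ideal.map (algebraMap A B) q.asIdeal).IsPrime :=
      IsLocalization.isPrime_of_isPrime_disjoint M B q.asIdeal q.2 hd
    set Q : Ideal B := Ideal.map (algebraMap A B) q.asIdeal with hQ
    have hIQ : I ≤ Q := by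
      have h1 : Ideal.map (algebraMap O A) p.asIdeal ≤ q.asIdeal :=
        Ideal.map_le_iff_le_comap.mpr (le_of_eq hq'.symm)
      calc I = Ideal.map (algebraMap A B) (Ideal.map (algebraMap O A) p.asIdeal) :=
            (Ideal.map_map _ _).symm
        _ ≤ Q := Ideal.map_mono h1
    have hkerle : RingHom.ker (Ideal.Quotient.mk I) ≤ Q := by
      rw [Ideal.mk_ker]; exact hIQ
    have hQ'' : (Ideal.map (Ideal.Quotient.mk I) Q).IsPrime :=
      Ideal.map_isPrime_of_surjective Ideal.Quotient.mk_surjective hkerle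
    refine ⟨⟨Ideal.map (Ideal.Quotient.mk I) Q, hQ''⟩, ?_⟩
    ext1
    show Ideal.comap f (Ideal.map (Ideal.Quotient.mk I) Q) = q.asIdeal
    have h2 : Ideal.comap (Ideal.Quotient.mk I) (Ideal.map (Ideal.Quotient.mk I) Q) = Q := by
      rw [Ideal.comap_map_of_surjective _ Ideal.Quotient.mk_surjective]
      rw [← RingHom.ker_eq_comap_bot, Ideal.mk_ker]
      exact sup_eq_left.mpr hIQ
    rw [show f = (Ideal.Quotient.mk I).comp (algebraMap A B) from rfl,
      ← Ideal.comap_comap, h2]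
    exact IsLocalization.comap_map_of_isPrime_disjoint M B q.2 hd

/-- For a valuation ring `O` of finite Krull dimension and a finite type `O`-algebra `A`,
the prime spectrum of `A` is a noetherian topological space. -/
theorem statement_9 (O A : Type*) [CommRing O] [IsDomain O] [ValuationRing O]
    (hdim : ∃ r : ℕ, ringKrullDim O = r)
    [CommRing A] [Algebra O A] [Algebra.FiniteType O A] :
    TopologicalSpace.NoetherianSpace (PrimeSpectrum A) := by
  haveI : Finite (PrimeSpectrum O) := spec_finite O hdim
  choose s hs hcov using fun p : PrimeSpectrum O => key O A p
  have hN : TopologicalSpace.NoetherianSpace (⋃ p, s p) :=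
    @TopologicalSpace.NoetherianSpace.iUnion _ _ _ s _ hs
  have hcover : (⋃ p, s p) = Set.univ := by
    rw [Set.eq_univ_iff_forall]
    intro q
    exact Set.mem_iUnion.mpr ⟨PrimeSpectrum.comap (algebraMap O A) q,
      hcov _ q rfl⟩
  rw [hcover] at hN
  exact TopologicalSpace.noetherian_univ_iff.mp hN
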